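/- Let A ∈ R^{n×n} be symmetric positive definite and α ∈ (0,1). Then there exist an upper triangular matrix R ∈ R^{n×n} and a vector u ∈ R^n such that A = (1−α) R^T R + u u^T (namely u = √α · R^T e where e is the all-ones vector). -/

import Mathlib

open Matrix

private def finWF (n : ℕ) : WellFoundedLT (Fin n) := inferInstance

private lemma posDef_conj_aux {n : ℕ} {S B : Matrix (Fin n) (Fin n) ℝ} (hS : S.PosDef)
    [Invertible B] : (B * S * Bᴴ).PosDef := by
  refine ⟨?_, fun x hx => ?_⟩
  · have hs : Sᴴ = S := hS.isHermitian.eq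
    unfold Matrix.IsHermitian
    calc (B * S * Bᴴ)ᴴ = B * Sᴴ * Bᴴ := by
          rw [conjTranspose_mul, conjTranspose_mul, conjTranspose_conjTranspose,
            Matrix.mul_assoc]
      _ = B * S * Bᴴ := by rw [hs]
  · exact (hS.mul_mul_conjTranspose_same (B := B) (Matrix.vecMul_injective_of_invertible B)).2 hx

set_option maxHeartbeats 1000000 in
private lemma real_cholesky {n : ℕ} (S : Matrix (Fin n) (Fin n) ℝ) (hS : S.PosDef) :
    ∃ U : Matrix (Fin n) (Fin n) ℝ, U.BlockTriangular id ∧ IsUnit U.det ∧ Uᵀ * U = S := by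
  haveI : WellFoundedLT (Fin n) := finWF n
  set W := @LDL.lowerInv ℝ _ (Fin n) _ (finWF n) _ S _ hS with hWdef
  set d := @LDL.diagEntries ℝ _ (Fin n) _ (finWF n) _ S _ hS with hddef
  haveI : Invertible W := by
    apply W.invertibleOfIsUnitDet
    exact @Matrix.isUnit_det_of_invertible (Fin n) ℝ _ _ _ W
        (@LDL.invertibleLowerInv ℝ _ (Fin n) _ (finWF n) _ S _ hS)
  have hdiag0 := @LDL.diag_eq_lowerInv_conj ℝ _ (Fin n) _ (finWF n) _ S _ hS
  have hdiag : diagonal d = W * S * Wᴴ := by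
    ext i j
    rw [← hdiag0]
    by_cases h : i = j
    · subst h; simp [LDL.diag, hddef]
    · simp [LDL.diag, diagonal_apply_ne, h]
  have hDpos : (diagonal d).PosDef := hdiag ▸ posDef_conj_aux hS
  have hd : ∀ i, 0 < d i := posDef_diagonal_iff.mp hDpos
  have hWt : (Wᵀ).BlockTriangular id := fun i j hij =>
    @LDL.lowerInv_triangular ℝ _ (Fin n) _ (finWF n) _ S _ hS _ _ hij
  haveI : Invertible Wᵀ := W.invertibleTranspose
  refine ⟨diagonal (fun i => Real.sqrt (d i)) * (Wᵀ)⁻¹, ?_, ?_, ?_⟩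
  · exact (blockTriangular_diagonal _).mul (blockTriangular_inv_of_blockTriangular hWt)
  · rw [det_mul, det_diagonal]
    exact ((Finset.prod_pos (fun i _ => Real.sqrt_pos.mpr (hd i))).ne').isUnit.mul
      (isUnit_det_of_invertible _)
  · have hWH : Wᴴ = Wᵀ := by
      ext i j; simp [conjTranspose_apply]
    have hS' : W⁻¹ * diagonal d * (Wᵀ)⁻¹ = S := by
      rw [hdiag, hWH, Matrix.mul_assoc, Matrix.mul_assoc, Matrix.mul_nonsing_inv _
        (isUnit_det_of_invertible _), Matrix.mul_one, ← Matrix.mul_assoc,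
        Matrix.nonsing_inv_mul _ (isUnit_det_of_invertible _), Matrix.one_mul]
    have hdd : (diagonal fun i => Real.sqrt (d i)) * (diagonal fun i => Real.sqrt (d i))
        = diagonal d := by
      have hfun : (fun i => Real.sqrt (d i) * Real.sqrt (d i)) = d :=
        funext fun i => Real.mul_self_sqrt (hd i).le
      rw [diagonal_mul_diagonal, hfun]
    have htr : ((Wᵀ)⁻¹)ᵀ = W⁻¹ := by
      rw [transpose_nonsing_inv, transpose_transpose]
    rw [transpose_mul, htr, diagonal_transpose, Matrix.mul_assoc,
      ← Matrix.mul_assoc (diagonal _), hdd, ← Matrix.mul_assoc, hS']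

theorem cholesky_plus_rank_one (n : ℕ) (A : Matrix (Fin n) (Fin n) ℝ)
    (hA : A.PosDef) (α : ℝ) (hα0 : 0 < α) (hα1 : α < 1) :
    ∃ R : Matrix (Fin n) (Fin n) ℝ, R.BlockTriangular id ∧
      A = (1 - α) • (Rᵀ * R) +
        Matrix.vecMulVec (Real.sqrt α • (Rᵀ *ᵥ (fun _ => 1)))
          (Real.sqrt α • (Rᵀ *ᵥ (fun _ => 1))) := by
  set e : Fin n → ℝ := fun _ => 1 with he
  set G : Matrix (Fin n) (Fin n) ℝ := (1 - α) • 1 + α • vecMulVec e e with hGdef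
  have hG : G.PosDef := by
    have h1 : ((1 - α) • (1 : Matrix (Fin n) (Fin n) ℝ)).PosDef := by
      rw [smul_one_eq_diagonal]
      exact Matrix.PosDef.diagonal (fun i => by linarith)
    have h2 : (α • vecMulVec e e).PosSemidef := by
      have key : α • vecMulVec e e
          = (replicateRow Unit (Real.sqrt α • e))ᴴ * replicateRow Unit (Real.sqrt α • e) := by
        ext i j
        simp only [Matrix.smul_apply, vecMulVec_apply, Matrix.mul_apply, conjTranspose_apply,
          replicateRow_apply, Pi.smul_apply, smul_eq_mul, he, Finset.univ_unique, Finset.sum_const,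
          Finset.card_singleton, one_smul, star_trivial, mul_one, smul_eq_mul]
        nlinarith [Real.mul_self_sqrt hα0.le, Real.sqrt_nonneg α]
      rw [key]
      exact posSemidef_conjTranspose_mul_self _
    exact h1.add_posSemidef h2
  obtain ⟨U, hUtri, hUdet, hUeq⟩ := real_cholesky A hA
  obtain ⟨V, hVtri, hVdet, hVeq⟩ := real_cholesky G hG
  haveI : Invertible V := V.invertibleOfIsUnitDet hVdet
  haveI : Invertible Vᵀ := V.invertibleTranspose
  refine ⟨V⁻¹ * U, (blockTriangular_inv_of_blockTriangular hVtri).mul hUtri, ?_⟩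
  set R := V⁻¹ * U with hRdef
  have hAG : A = Rᵀ * G * R := by
    rw [hRdef, ← hVeq]
    simp only [transpose_mul, transpose_nonsing_inv, Matrix.mul_assoc,
      Matrix.mul_inv_cancel_left_of_invertible, Matrix.inv_mul_cancel_left_of_invertible]
    exact hUeq.symm
  rw [hAG, hGdef]
  have hexp : Rᵀ * ((1 - α) • 1 + α • vecMulVec e e) * R
      = (1 - α) • (Rᵀ * R) + α • (Rᵀ * vecMulVec e e * R) := by
    rw [Matrix.mul_add, Matrix.add_mul, Matrix.mul_smul, Matrix.mul_one,
      Matrix.smul_mul, Matrix.mul_smul, Matrix.smul_mul]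
  rw [hexp]
  congr 1
  ext i j
  simp only [vecMulVec_apply, Pi.smul_apply, smul_eq_mul, Matrix.smul_apply,
    Matrix.mul_apply, mulVec, dotProduct, transpose_apply, he, mul_one, one_mul]
  rw [← Finset.mul_sum]
  have hsq : Real.sqrt α * Real.sqrt α = α := Real.mul_self_sqrt hα0.le
  linear_combination (-(∑ x : Fin n, R x i) * (∑ x : Fin n, R x j)) * hsq
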